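/- Let c_i^n denote the Taylor coefficients at z = 0 of (z + 1/(z+2))^n, i.e., (z + 1/(z+2))^n = Σ_{i≥0} c_i^n z^i. Then for any integers n ≥ 0 and l ≥ 0, c_{n+l+1}^n = ((−1)^l / 2^{2n+l+1}) Σ_{a=0}^l C(l,a) C(2n, n−1−a) (−1)^a. -/

import Mathlib

/-- Binomial coefficient `C(m, j)` for an integer lower index, equal to `0` when `j < 0`. -/
def ichoose (m : ℕ) (j : ℤ) : ℕ := if 0 ≤ j then m.choose j.toNat else 0


open Finset Polynomial

-- uniqueness of power series coefficients
lemma coeff_unique {f : ℝ → ℝ} {c d : ℕ → ℝ}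
    (hc : ∀ x : ℝ, |x| < 2 → HasSum (fun i : ℕ => c i * x ^ i) (f x))
    (hd : ∀ x : ℝ, |x| < 2 → HasSum (fun i : ℕ => d i * x ^ i) (f x)) : c = d := by
  have key : ∀ e : ℕ → ℝ, (∀ x : ℝ, |x| < 2 → HasSum (fun i : ℕ => e i * x ^ i) (f x)) →
      HasFPowerSeriesAt f (FormalMultilinearSeries.ofScalars ℝ e) 0 := by
    intro e he
    refine ⟨1, ?_, one_pos, ?_⟩
    · apply FormalMultilinearSeries.le_radius_of_tendsto _ (l := 0)
      have h1 : Filter.Tendsto (fun i => e i * (1:ℝ) ^ i) Filter.atTop (nhds 0) :=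
        (he 1 (by norm_num)).summable.tendsto_atTop_zero
      simp only [one_pow, mul_one] at h1
      have : (fun i : ℕ => ‖(FormalMultilinearSeries.ofScalars ℝ e) i‖ * ((1:NNReal):ℝ)^i) = fun i => |e i| := by
        funext i
        rw [FormalMultilinearSeries.ofScalars_norm]
        simp [Real.norm_eq_abs]
      rw [this]
      simpa using h1.abs
    · intro y hy
      rw [mem_emetric_ball_zero_iff] at hy
      have hy2 : |y| < 2 := by
        have : ‖y‖ < 1 := by
          rw [← ofReal_norm_eq_enorm, ENNReal.ofReal_lt_one] at hy; exact hy
        rw [Real.norm_eq_abs] at this; linarith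
      have : (fun i : ℕ => (FormalMultilinearSeries.ofScalars ℝ e) i (fun _ => y)) = fun i => e i * y ^ i := by
        funext i
        rw [FormalMultilinearSeries.ofScalars_apply_eq, smul_eq_mul]
      rw [zero_add, this]
      exact he y hy2
  have := (key c hc).eq_formalMultilinearSeries (key d hd)
  exact (FormalMultilinearSeries.ofScalars_series_eq_iff ℝ c d).mp this

noncomputable def ecoef (n k : ℕ) : ℝ := (-1)^k * ((k + (n-1)).choose (n-1) : ℝ) / 2^(n+k)

noncomputable def dcoef (n i : ℕ) : ℝ :=
  ∑ j ∈ Finset.range (2*n+1), if j ≤ i then ((2*n).choose j : ℝ) * ecoef n (i - j) else 0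

lemma hasSum_ecoef (n : ℕ) (hn : 1 ≤ n) {x : ℝ} (hx : |x| < 2) :
    HasSum (fun k => ecoef n k * x ^ k) (1 / (x + 2) ^ n) := by
  obtain ⟨hx1, hx2⟩ := abs_lt.mp hx
  have hx0 : x + 2 ≠ 0 := by linarith
  have hr : ‖-x/2‖ < 1 := by
    rw [Real.norm_eq_abs, abs_div, abs_neg, abs_two, div_lt_one (by norm_num)]
    exact hx
  have h := (hasSum_choose_mul_geometric_of_norm_lt_one (𝕜 := ℝ) (n-1) hr).mul_left ((1:ℝ)/2^n)
  rw [show n - 1 + 1 = n from by omega] at h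
  have hfun : (fun k => ecoef n k * x ^ k) =
      fun k => (1:ℝ)/2^n * (((k + (n-1)).choose (n-1):ℝ) * (-x/2)^k) := by
    funext k
    rw [ecoef, div_pow, neg_pow, pow_add]
    field_simp
    ring
  have hval : (1:ℝ)/2^n * (1/(1 - (-x/2))^n) = 1/(x+2)^n := by
    rw [show (1 : ℝ) - (-x/2) = (x+2)/2 by ring, div_pow]
    field_simp
  rw [hfun, ← hval]
  exact h

lemma hasSum_dcoef (n : ℕ) (hn : 1 ≤ n) {x : ℝ} (hx : |x| < 2) :
    HasSum (fun i => dcoef n i * x ^ i) ((x + 1/(x+2)) ^ n) := by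
  obtain ⟨hx1, hx2⟩ := abs_lt.mp hx
  have hx0 : x + 2 ≠ 0 := by linarith
  have he := hasSum_ecoef n hn hx
  have hg : ∀ j : ℕ, HasSum
      (fun i => if j ≤ i then ((2*n).choose j : ℝ) * ecoef n (i - j) * x ^ i else 0)
      (((2*n).choose j : ℝ) * x ^ j * (1/(x+2)^n)) := by
    intro j
    have h1 := he.mul_left (((2*n).choose j : ℝ) * x ^ j)
    have h2 : Function.Injective (fun k : ℕ => j + k) := add_right_injective j
    have hside : ∀ i ∉ Set.range (fun k : ℕ => j + k),
        (if j ≤ i then ((2*n).choose j : ℝ) * ecoef n (i - j) * x ^ i else 0) = 0 := by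
      intro i hi
      rw [if_neg]
      intro hji
      exact hi ⟨i - j, show j + (i - j) = i by omega⟩
    rw [← Function.Injective.hasSum_iff h2 hside]
    have : ((fun i => if j ≤ i then ((2*n).choose j : ℝ) * ecoef n (i - j) * x ^ i else 0) ∘
        (fun k : ℕ => j + k)) = fun k => ((2*n).choose j : ℝ) * x ^ j * (ecoef n k * x ^ k) := by
      funext k
      simp only [Function.comp_apply]
      rw [if_pos (Nat.le_add_right j k), Nat.add_sub_cancel_left, pow_add]
      ring
    rw [this]
    exact h1
  have hsum := hasSum_sum (f := fun (j : ℕ) (i : ℕ) =>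
      if j ≤ i then ((2*n).choose j : ℝ) * ecoef n (i - j) * x ^ i else 0)
      (s := Finset.range (2*n+1)) (fun j _ => hg j)
  have hfun : (fun i => ∑ j ∈ Finset.range (2*n+1),
      if j ≤ i then ((2*n).choose j : ℝ) * ecoef n (i - j) * x ^ i else 0) =
      fun i => dcoef n i * x ^ i := by
    funext i
    rw [dcoef, Finset.sum_mul]
    apply Finset.sum_congr rfl
    intro j _
    by_cases h : j ≤ i <;> simp [h, mul_assoc]
  have hval : ∑ j ∈ Finset.range (2*n+1), ((2*n).choose j : ℝ) * x ^ j * (1/(x+2)^n) =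
      (x + 1/(x+2)) ^ n := by
    rw [← Finset.sum_mul]
    have h1 : ∑ j ∈ Finset.range (2*n+1), ((2*n).choose j : ℝ) * x ^ j = (x+1)^(2*n) := by
      rw [add_pow]
      apply Finset.sum_congr rfl
      intro j _
      rw [one_pow]
      ring
    rw [h1]
    have h2 : x + 1/(x+2) = (x+1)^2/(x+2) := by
      field_simp
      ring
    rw [h2, div_pow, pow_mul]
    field_simp
  rw [hfun, hval] at hsum
  exact hsum

lemma coeff_one_sub_X_pow (m k : ℕ) :
    ((1 - X : Polynomial ℝ) ^ m).coeff k = (-1:ℝ)^k * m.choose k := by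
  have h : ((1:Polynomial ℝ) - X) ^ m =
      Polynomial.C ((-1:ℝ)^m) * (X + Polynomial.C (-1)) ^ m := by
    rw [map_pow, ← mul_pow]
    congr 1
    simp
    ring
  rw [h, Polynomial.coeff_C_mul, Polynomial.coeff_X_add_C_pow]
  by_cases hk : k ≤ m
  · have e1 : (-1:ℝ)^m = (-1)^(m-k) * (-1)^k := by
      rw [← pow_add]
      congr 1
      omega
    rw [e1]
    have e2 : ((-1:ℝ)^(m-k)) * ((-1:ℝ)^(m-k)) = 1 := by
      rw [← pow_add, ← two_mul, pow_mul]
      norm_num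
    linear_combination ((-1:ℝ)^k * (m.choose k)) * e2
  · rw [Nat.choose_eq_zero_of_lt (by omega)]
    simp

lemma claimR (n l : ℕ) (hn : 1 ≤ n) :
    ∑ a ∈ Finset.range (l+1),
        (l.choose a : ℝ) * (ichoose (2*n) ((n:ℤ)-1-a) : ℝ) * (-1:ℝ)^a
      = (-1:ℝ)^(n-1) * (((1+X)^l * (1-X)^(2*n) : Polynomial ℝ)).coeff (n-1) := by
  have hP : (((1+X)^l * (1-X)^(2*n) : Polynomial ℝ)).coeff (n-1) =
      ∑ u ∈ Finset.range n,
        (l.choose u : ℝ) * ((-1:ℝ)^(n-1-u) * ((2*n).choose (n-1-u) : ℝ)) := by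
    rw [Polynomial.coeff_mul, Finset.Nat.sum_antidiagonal_eq_sum_range_succ_mk,
      show (n - 1).succ = n from by omega]
    apply Finset.sum_congr rfl
    intro u _
    rw [Polynomial.coeff_one_add_X_pow, coeff_one_sub_X_pow]
  -- common function
  set F : ℕ → ℝ := fun a =>
    (l.choose a : ℝ) * (if a < n then ((2*n).choose (n-1-a) : ℝ) else 0) * (-1:ℝ)^a with hF
  have hL : ∑ a ∈ Finset.range (l+1),
      (l.choose a : ℝ) * (ichoose (2*n) ((n:ℤ)-1-a) : ℝ) * (-1:ℝ)^a
      = ∑ a ∈ Finset.range (l+1), F a := by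
    apply Finset.sum_congr rfl
    intro a _
    rw [hF]
    congr 1
    congr 1
    rw [ichoose]
    by_cases h : a < n
    · rw [if_pos (by omega : (0:ℤ) ≤ (n:ℤ)-1-a), if_pos h]
      have ht : ((n:ℤ)-1-↑a).toNat = n-1-a := by omega
      rw [ht]
    · rw [if_neg (by omega : ¬ (0:ℤ) ≤ (n:ℤ)-1-a), if_neg h]
      simp
  have hR : (-1:ℝ)^(n-1) * (((1+X)^l * (1-X)^(2*n) : Polynomial ℝ)).coeff (n-1)
      = ∑ u ∈ Finset.range n, F u := by
    rw [hP, Finset.mul_sum]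
    apply Finset.sum_congr rfl
    intro u hu
    rw [Finset.mem_range] at hu
    simp only [hF]
    rw [if_pos hu]
    have e1 : (-1:ℝ)^(n-1) * (-1:ℝ)^(n-1-u) = (-1)^u := by
      rw [← pow_add, show n-1+(n-1-u) = u + 2*(n-1-u) from by omega, pow_add, pow_mul]
      norm_num
    linear_combination ((l.choose u : ℝ) * ((2*n).choose (n-1-u) : ℝ)) * e1
  rw [hL, hR]
  -- extend both to range (n + l + 1)
  have hzero1 : ∀ a ∈ Finset.range (n+l+1), a ∉ Finset.range (l+1) → F a = 0 := by
    intro a _ ha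
    rw [Finset.mem_range] at ha
    simp only [hF]
    rw [Nat.choose_eq_zero_of_lt (by omega)]
    simp
  have hzero2 : ∀ a ∈ Finset.range (n+l+1), a ∉ Finset.range n → F a = 0 := by
    intro a _ ha
    rw [Finset.mem_range] at ha
    simp only [hF]
    rw [if_neg (by omega : ¬ a < n)]
    simp
  rw [Finset.sum_subset (Finset.range_subset_range.mpr (by omega)) hzero1,
    Finset.sum_subset (Finset.range_subset_range.mpr (by omega)) hzero2]

lemma claimL (n l : ℕ) (hn : 1 ≤ n) :
    dcoef n (n+l+1) =
      (-1:ℝ)^(n+l+1) / 2^(2*n+l+1) * (((1+X)^l * (1-X)^(2*n) : Polynomial ℝ)).coeff (n-1) := by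
  have hP : (((1+X)^l * (1-X)^(2*n) : Polynomial ℝ)).coeff (n-1) =
      ∑ j ∈ Finset.range (2*n+1),
        ((2*n).choose j : ℝ) * (-2:ℝ)^j * ((2*n+l-j).choose (n-1) : ℝ) := by
    have h2 : (1 - X : Polynomial ℝ)^(2*n) = ((X+1) + Polynomial.C (-2))^(2*n) := by
      have h3 : ((X:Polynomial ℝ)+1) + Polynomial.C (-2) = -(1 - X) := by
        simp [map_ofNat]
        ring
      rw [h3, Even.neg_pow (even_two_mul n)]
    have h1 : ((1+X)^l * (1-X)^(2*n) : Polynomial ℝ) =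
        ∑ k ∈ Finset.range (2*n+1),
          (X+1)^(l+k) * Polynomial.C ((-2:ℝ)^(2*n-k) * ((2*n).choose k : ℝ)) := by
      rw [h2, add_pow (X+1) (Polynomial.C (-2)) (2*n), Finset.mul_sum]
      apply Finset.sum_congr rfl
      intro k _
      rw [pow_add, ← map_pow, ← Polynomial.C_eq_natCast, map_mul]
      ring
    rw [h1, Polynomial.finset_sum_coeff]
    rw [Finset.sum_congr rfl (fun k _ => by
      rw [Polynomial.coeff_mul_C, Polynomial.coeff_X_add_one_pow] :
      ∀ k ∈ Finset.range (2*n+1),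
        ((X+1:Polynomial ℝ)^(l+k) * Polynomial.C ((-2:ℝ)^(2*n-k) * ((2*n).choose k:ℝ))).coeff (n-1)
        = ((l+k).choose (n-1) : ℝ) * ((-2:ℝ)^(2*n-k) * ((2*n).choose k : ℝ)))]
    rw [← Finset.sum_range_reflect]
    apply Finset.sum_congr rfl
    intro j hj
    rw [Finset.mem_range] at hj
    rw [show 2*n+1-1-j = 2*n-j from by omega,
      show l + (2*n-j) = 2*n+l-j from by omega,
      show 2*n-(2*n-j) = j from by omega,
      Nat.choose_symm (by omega : j ≤ 2*n)]
    ring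
  rw [hP, dcoef, Finset.mul_sum, Finset.sum_congr rfl]
  intro j hj
  rw [Finset.mem_range] at hj
  by_cases h : j ≤ n+l+1
  · rw [if_pos h, ecoef,
      show (n+l+1-j) + (n-1) = 2*n+l-j from by omega,
      show n + (n+l+1-j) = 2*n+l+1-j from by omega]
    have e1 : (-1:ℝ)^(n+l+1-j) * (-1)^j = (-1)^(n+l+1) := by
      rw [← pow_add]
      congr 1
      omega
    have e2 : (2:ℝ)^(2*n+l+1-j) * 2^j = 2^(2*n+l+1) := by
      rw [← pow_add]
      congr 1
      omega
    have h2 : ((-2:ℝ))^j = (-1)^j * 2^j := by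
      rw [show (-2:ℝ) = (-1) * 2 from by norm_num, mul_pow]
    rw [h2, ← e1, ← e2]
    have hne : ((2:ℝ)^(2*n+l+1-j)) ≠ 0 := by positivity
    have hne2 : ((2:ℝ)^j) ≠ 0 := by positivity
    field_simp
    have e4 : ((-1:ℝ)^j) * ((-1)^j) = 1 := by
      rw [← pow_add, ← two_mul, pow_mul]
      norm_num
    linear_combination (-(((2*n).choose j : ℝ) * ((2*n+l-j).choose (n-1) : ℝ))) * e4
  · rw [if_neg h, Nat.choose_eq_zero_of_lt (show 2*n+l-j < n-1 from by omega)]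
    simp

theorem stmt_14 (n : ℕ) (c : ℕ → ℝ)
    (hc : ∀ x : ℝ, |x| < 2 → HasSum (fun i : ℕ => c i * x ^ i) ((x + 1 / (x + 2)) ^ n))
    (l : ℕ) :
    c (n + l + 1) =
      ((-1 : ℝ) ^ l / 2 ^ (2 * n + l + 1)) *
        ∑ a ∈ Finset.range (l + 1),
          (l.choose a : ℝ) * (ichoose (2 * n) ((n : ℤ) - 1 - a) : ℝ) * (-1 : ℝ) ^ a := by
  rcases Nat.eq_zero_or_pos n with h0 | hn
  · subst h0
    have hd0 : ∀ x : ℝ, |x| < 2 →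
        HasSum (fun i : ℕ => (if i = 0 then (1:ℝ) else 0) * x ^ i) ((x + 1/(x+2))^0) := by
      intro x hx
      rw [pow_zero]
      have h := hasSum_ite_eq (0:ℕ) (1:ℝ)
      have hf : (fun i : ℕ => (if i = 0 then (1:ℝ) else 0) * x ^ i) =
          fun i => if i = 0 then (1:ℝ) else 0 := by
        funext i
        by_cases h : i = 0 <;> simp [h]
      rw [hf]
      exact h
    have hcd := coeff_unique hc hd0
    rw [hcd]
    have hs : ∀ a ∈ Finset.range (l+1),
        (l.choose a : ℝ) * (ichoose (2*0) (((0:ℕ):ℤ) - 1 - (a:ℕ)) : ℝ) * (-1:ℝ)^a = 0 := by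
      intro a _
      rw [ichoose, if_neg (by omega : ¬ (0:ℤ) ≤ ((0:ℕ):ℤ) - 1 - (a:ℕ))]
      simp
    rw [Finset.sum_eq_zero hs]
    simp
  · have hcd := coeff_unique hc (fun x _hx => hasSum_dcoef n hn _hx)
    rw [hcd, claimL n l hn,
      show ∑ a ∈ Finset.range (l+1),
          (l.choose a : ℝ) * (ichoose (2*n) ((n:ℤ)-1-a) : ℝ) * (-1:ℝ)^a
        = (-1:ℝ)^(n-1) * (((1+X)^l * (1-X)^(2*n) : Polynomial ℝ)).coeff (n-1)
        from claimR n l hn]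
    have e : (-1:ℝ)^(n+l+1) = (-1)^l * (-1)^(n-1) := by
      rw [show n+l+1 = l+(n-1)+2 from by omega, pow_add, pow_add]
      norm_num
    rw [e]
    ring
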